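/- Let P ≥ 1, ν > 0, ρ > 0, and let s ∈ ℂ^P be a vector all of whose entries have modulus 1. Let F ∈ ℂ with |F| = ρ, and let W be a random vector in ℂ^P with i.i.d. complex Gaussian entries CN(0, ν²). Then for any γ with 0 < γ < ρ²/ν², ℙ( (1/P)·‖F·s + W‖² ≤ (1 + γ)·ν² ) ≤ exp( −(P/2)·(ρ²/ν² − γ)² / (1 + 2ρ²/ν²) ). (This bounds the probability that a singleton bin is missed, i.e., incorrectly passes the zero-ton verification test.) -/

import Mathlib

open MeasureTheory ProbabilityTheory Real
open scoped NNReal ENNReal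

lemma log_quad_lb {u : ℝ} (hu : 0 ≤ u) : u - u^2/2 ≤ Real.log (1+u) := by
  have hmono : MonotoneOn (fun y : ℝ => Real.log (1+y) - y + y^2/2) (Set.Ici 0) := by
    have hderiv : ∀ y ∈ interior (Set.Ici (0:ℝ)),
        HasDerivAt (fun y : ℝ => Real.log (1+y) - y + y^2/2) ((1+y)⁻¹ - 1 + y) y := by
      intro y hy
      rw [interior_Ici] at hy
      have hy' : (0:ℝ) < y := hy
      have h1 : HasDerivAt (fun y : ℝ => 1 + y) 1 y := (hasDerivAt_id y).const_add 1
      have h2 : HasDerivAt (fun y : ℝ => Real.log (1+y)) ((1+y)⁻¹) y := by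
        simpa [one_div] using h1.log (by positivity)
      have h3 : HasDerivAt (fun y : ℝ => y^2/2) y y := by
        simpa using (hasDerivAt_pow 2 y).div_const 2
      exact (h2.sub (hasDerivAt_id' y)).add h3
    apply monotoneOn_of_deriv_nonneg (convex_Ici 0)
    · apply ContinuousOn.add
      apply ContinuousOn.sub
      · exact (continuousOn_const.add continuousOn_id).log (fun y hy => by
          have : (0:ℝ) ≤ y := hy; show (1:ℝ) + y ≠ 0; positivity)
      · exact continuousOn_id
      · exact (continuous_pow 2).continuousOn.div_const 2
    · intro y hy
      exact (hderiv y hy).differentiableAt.differentiableWithinAt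
    · intro y hy
      rw [(hderiv y hy).deriv]
      rw [interior_Ici] at hy
      have hy' : (0:ℝ) < y := hy
      have : (1+y)⁻¹ - 1 + y = y^2/(1+y) := by field_simp; ring
      rw [this]; positivity
  have h0 := hmono Set.self_mem_Ici hu hu
  simp only [Real.log_one, add_zero] at h0
  norm_num at h0
  linarith

lemma gauss_integral_exp (v : ℝ≥0) (hv : 0 < (v:ℝ)) {t : ℝ} (ht : 0 < t) (m : ℝ) :
    ∫ x, Real.exp (-(t * (m + x)^2)) ∂(gaussianReal 0 v)
      = (Real.sqrt (1 + 2*(v:ℝ)*t))⁻¹ * Real.exp (-(t * m^2) / (1 + 2*(v:ℝ)*t)) := by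
  have hv0 : v ≠ 0 := by exact_mod_cast hv.ne'
  have hA : (0:ℝ) < 1 + 2*(v:ℝ)*t := by positivity
  rw [gaussianReal_of_var_ne_zero _ hv0, gaussianPDF_def]
  have hd : (fun x => ENNReal.ofReal (gaussianPDFReal 0 v x))
      = fun x => (((gaussianPDFReal 0 v x).toNNReal : ℝ≥0) : ℝ≥0∞) := rfl
  rw [hd]
  rw [integral_withDensity_eq_integral_smul
    (measurable_gaussianPDFReal 0 v).real_toNNReal]
  have hpt : ∀ x : ℝ, (gaussianPDFReal 0 v x).toNNReal • Real.exp (-(t * (m + x)^2))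
      = (Real.sqrt (2*π*(v:ℝ)))⁻¹ * (Real.exp (-(t*m^2)/(1+2*(v:ℝ)*t)) *
          Real.exp (-((t + (2*(v:ℝ))⁻¹) * (x + t*m/(t + (2*(v:ℝ))⁻¹))^2))) := by
    intro x
    have ha : (0:ℝ) < t + (2*(v:ℝ))⁻¹ := by positivity
    rw [NNReal.smul_def, Real.coe_toNNReal _ (gaussianPDFReal_nonneg 0 v x), smul_eq_mul]
    rw [gaussianPDFReal]
    have hexp : Real.exp (-(x - 0)^2/(2*(v:ℝ))) * Real.exp (-(t * (m + x)^2))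
        = Real.exp (-(t*m^2)/(1+2*(v:ℝ)*t)) *
            Real.exp (-((t + (2*(v:ℝ))⁻¹) * (x + t*m/(t + (2*(v:ℝ))⁻¹))^2)) := by
      rw [← Real.exp_add, ← Real.exp_add]
      congr 1
      field_simp
      ring
    rw [mul_assoc, hexp]
  rw [funext hpt, integral_const_mul, integral_const_mul]
  have ha : (0:ℝ) < t + (2*(v:ℝ))⁻¹ := by positivity
  have hint : ∫ x : ℝ, Real.exp (-((t + (2*(v:ℝ))⁻¹) * (x + t*m/(t + (2*(v:ℝ))⁻¹))^2))
      = Real.sqrt (π / (t + (2*(v:ℝ))⁻¹)) := by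
    rw [← integral_gaussian]
    rw [← integral_add_right_eq_self (μ := volume)
      (fun y : ℝ => Real.exp (-(t + (2*(v:ℝ))⁻¹) * y^2)) (t*m/(t + (2*(v:ℝ))⁻¹))]
    congr 1
    funext x
    congr 1
    ring
  rw [hint]
  have hc : (Real.sqrt (2*π*(v:ℝ)))⁻¹ * Real.sqrt (π / (t + (2*(v:ℝ))⁻¹))
      = (Real.sqrt (1 + 2*(v:ℝ)*t))⁻¹ := by
    have h2 : π / (t + (2*(v:ℝ))⁻¹) = (2*π*(v:ℝ)) / (1 + 2*(v:ℝ)*t) := by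
      field_simp; ring
    rw [h2, Real.sqrt_div (by positivity)]
    have h3 : Real.sqrt (2*π*(v:ℝ)) ≠ 0 := by positivity
    field_simp
  calc (Real.sqrt (2*π*(v:ℝ)))⁻¹ * (Real.exp (-(t*m^2)/(1+2*(v:ℝ)*t)) * Real.sqrt (π / (t + (2*(v:ℝ))⁻¹)))
      = ((Real.sqrt (2*π*(v:ℝ)))⁻¹ * Real.sqrt (π / (t + (2*(v:ℝ))⁻¹))) * Real.exp (-(t*m^2)/(1+2*(v:ℝ)*t)) := by ring
    _ = _ := by rw [hc]

lemma integral_pi_eq_prod {P : ℕ} (m : Measure (ℝ × ℝ)) [IsProbabilityMeasure m]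
    (g : Fin P → (ℝ × ℝ) → ℝ) :
    ∫ x : Fin P → ℝ × ℝ, ∏ p, g p (x p) ∂(Measure.pi fun _ => m)
      = ∏ p, ∫ y, g p y ∂m := by
  letI : MeasureSpace (ℝ × ℝ) := ⟨m⟩
  have hsf : SigmaFinite (volume : Measure (ℝ × ℝ)) := by infer_instance
  exact MeasureTheory.integral_fintype_prod_eq_prod g

set_option maxHeartbeats 2000000 in
theorem singleton_missed_verification_bound
    (P : ℕ) (hP : 1 ≤ P) (ν ρ : ℝ) (hν : 0 < ν) (hρ : 0 < ρ)
    (s : Fin P → ℂ) (hs : ∀ p, ‖s p‖ = 1)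
    (F : ℂ) (hF : ‖F‖ = ρ)
    (γ : ℝ) (hγ₁ : 0 < γ) (hγ₂ : γ < ρ ^ 2 / ν ^ 2) :
    (Measure.pi (fun _ : Fin P =>
        (gaussianReal 0 ((ν ^ 2 / 2).toNNReal)).prod (gaussianReal 0 ((ν ^ 2 / 2).toNNReal))))
        {x : Fin P → ℝ × ℝ |
          (1 / (P : ℝ)) *
            ∑ p, ‖F * s p + (((x p).1 : ℂ) + ((x p).2 : ℂ) * Complex.I)‖ ^ 2
            ≤ (1 + γ) * ν ^ 2}
      ≤ ENNReal.ofReal (Real.exp (-((P : ℝ) / 2) *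
          (ρ ^ 2 / ν ^ 2 - γ) ^ 2 / (1 + 2 * ρ ^ 2 / ν ^ 2))) := by
  have hν2 : (0:ℝ) < ν^2 := by positivity
  have hνne : (ν:ℝ) ≠ 0 := hν.ne'
  have hvR : (((ν^2/2).toNNReal : ℝ≥0) : ℝ) = ν^2/2 := Real.coe_toNNReal _ (by positivity)
  have hv : (0:ℝ) < (((ν^2/2).toNNReal : ℝ≥0) : ℝ) := by rw [hvR]; positivity
  have hr : (0:ℝ) < ρ^2/ν^2 := by positivity
  have hδ : (0:ℝ) < ρ^2/ν^2 - γ := by linarith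
  have h12r : (0:ℝ) < 1 + 2*(ρ^2/ν^2) := by positivity
  set u : ℝ := (ρ^2/ν^2 - γ)/(1 + 2*(ρ^2/ν^2)) with hu_def
  have hu : 0 < u := div_pos hδ h12r
  have huδ : u * (1 + 2*(ρ^2/ν^2)) = ρ^2/ν^2 - γ := by
    rw [hu_def]; field_simp
  set t : ℝ := u / ν^2 with ht_def
  have ht : 0 < t := div_pos hu hν2
  have h1u : (0:ℝ) < 1 + u := by positivity
  have h2vt : 2*(((ν^2/2).toNNReal : ℝ≥0):ℝ)*t = u := by
    rw [hvR, ht_def]; field_simp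
  have hms : ∀ p, (F * s p).re^2 + (F * s p).im^2 = ρ^2 := by
    intro p
    have habsp : ‖F * s p‖ = ρ := by rw [norm_mul, hs p, hF, mul_one]
    have h1 : ‖F*s p‖^2 = ρ^2 := by rw [habsp]
    rw [Complex.sq_norm, Complex.normSq_apply] at h1
    rw [pow_two, pow_two]
    exact h1
  set m : Measure (ℝ × ℝ) :=
    (gaussianReal 0 ((ν^2/2).toNNReal)).prod (gaussianReal 0 ((ν^2/2).toNNReal)) with hm_def
  set S : (Fin P → ℝ × ℝ) → ℝ :=
    fun x => ∑ p, (((F*s p).re + (x p).1)^2 + ((F*s p).im + (x p).2)^2) with hS_def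
  have habs : ∀ (x : Fin P → ℝ × ℝ) (p : Fin P),
      ‖F * s p + (((x p).1 : ℂ) + ((x p).2 : ℂ) * Complex.I)‖^2
        = ((F*s p).re + (x p).1)^2 + ((F*s p).im + (x p).2)^2 := by
    intro x p
    rw [Complex.sq_norm, Complex.normSq_apply]
    simp [Complex.add_re, Complex.add_im, Complex.mul_re, Complex.mul_im,
      Complex.I_re, Complex.I_im, Complex.ofReal_re, Complex.ofReal_im]
    ring
  have hmeasS : Measurable S := by
    apply Finset.measurable_sum
    intro p _
    exact (((measurable_const.add ((measurable_pi_apply p).fst)).pow_const 2).add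
      ((measurable_const.add ((measurable_pi_apply p).snd)).pow_const 2))
  have hS0 : ∀ x, 0 ≤ S x := fun x => Finset.sum_nonneg fun p _ => by positivity
  have hP0 : (0:ℝ) < P := by exact_mod_cast hP
  set c : ℝ := (1+γ)*ν^2 with hc_def
  -- Markov / Chernoff step
  have hsub : {x : Fin P → ℝ × ℝ |
      (1 / (P : ℝ)) * ∑ p, ‖F * s p + (((x p).1 : ℂ) + ((x p).2 : ℂ) * Complex.I)‖ ^ 2
        ≤ (1 + γ) * ν ^ 2}
      ⊆ {x : Fin P → ℝ × ℝ | ENNReal.ofReal (Real.exp (-(t * ((P:ℝ) * c))))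
          ≤ ENNReal.ofReal (Real.exp (-(t * S x)))} := by
    intro x hx
    simp only [Set.mem_setOf_eq] at hx ⊢
    have hsum : ∑ p, ‖F * s p + (((x p).1 : ℂ) + ((x p).2 : ℂ) * Complex.I)‖ ^ 2
        = S x := Finset.sum_congr rfl fun p _ => habs x p
    rw [hsum] at hx
    have hxS : S x ≤ (P:ℝ) * c := by
      rw [one_div, inv_mul_le_iff₀ hP0] at hx
      exact hx
    exact ENNReal.ofReal_le_ofReal (Real.exp_le_exp.2
      (neg_le_neg (mul_le_mul_of_nonneg_left hxS ht.le)))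
  have hmeasf : Measurable fun x : Fin P → ℝ × ℝ => ENNReal.ofReal (Real.exp (-(t * S x))) :=
    (Real.measurable_exp.comp ((hmeasS.const_mul t).neg)).ennreal_ofReal
  have hε0 : ENNReal.ofReal (Real.exp (-(t * ((P:ℝ) * c)))) ≠ 0 := by
    simp [ENNReal.ofReal_eq_zero, not_le, Real.exp_pos]
  have hεtop : ENNReal.ofReal (Real.exp (-(t * ((P:ℝ) * c)))) ≠ ⊤ := ENNReal.ofReal_ne_top
  have hmarkov := meas_ge_le_lintegral_div (μ := Measure.pi fun _ : Fin P => m)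
    hmeasf.aemeasurable hε0 hεtop
  -- integrability and computation of the integral
  have hintble : Integrable (fun x : Fin P → ℝ × ℝ => Real.exp (-(t * S x)))
      (Measure.pi fun _ : Fin P => m) := by
    apply Integrable.mono' (integrable_const (1:ℝ))
    · exact ((hmeasS.const_mul t).neg.exp).aestronglyMeasurable
    · refine ae_of_all _ fun x => ?_
      rw [Real.norm_eq_abs, abs_of_pos (Real.exp_pos _)]
      exact Real.exp_le_one_iff.mpr (neg_nonpos.mpr (mul_nonneg ht.le (hS0 x)))
  have hlint : ∫⁻ x, ENNReal.ofReal (Real.exp (-(t * S x))) ∂(Measure.pi fun _ : Fin P => m)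
      = ENNReal.ofReal (∫ x, Real.exp (-(t * S x)) ∂(Measure.pi fun _ : Fin P => m)) :=
    (ofReal_integral_eq_lintegral_ofReal hintble
      (ae_of_all _ fun x => (Real.exp_pos _).le)).symm
  set g : Fin P → (ℝ × ℝ) → ℝ :=
    fun p y => Real.exp (-(t * (((F*s p).re + y.1)^2 + ((F*s p).im + y.2)^2))) with hg_def
  have hsplit : ∀ x : Fin P → ℝ × ℝ, Real.exp (-(t * S x)) = ∏ p, g p (x p) := by
    intro x
    rw [hS_def]
    simp only []
    rw [Finset.mul_sum, ← Finset.sum_neg_distrib, Real.exp_sum]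
  have hprod : ∫ x, Real.exp (-(t * S x)) ∂(Measure.pi fun _ : Fin P => m)
      = ∏ p : Fin P, ∫ y, g p y ∂m := by
    rw [integral_congr_ae (ae_of_all _ hsplit)]
    exact integral_pi_eq_prod m g
  have hone : ∀ p : Fin P, ∫ y, g p y ∂m
      = (1+u)⁻¹ * Real.exp (-(t*ρ^2)/(1+u)) := by
    intro p
    have hsplit2 : ∀ y : ℝ × ℝ, g p y
        = Real.exp (-(t * ((F*s p).re + y.1)^2)) * Real.exp (-(t * ((F*s p).im + y.2)^2)) := by
      intro y
      rw [hg_def]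
      simp only []
      rw [← Real.exp_add]
      congr 1
      ring
    rw [integral_congr_ae (ae_of_all _ hsplit2), hm_def]
    rw [integral_prod_mul (f := fun a : ℝ => Real.exp (-(t * ((F*s p).re + a)^2)))
      (g := fun b : ℝ => Real.exp (-(t * ((F*s p).im + b)^2)))]
    rw [gauss_integral_exp _ hv ht, gauss_integral_exp _ hv ht, h2vt]
    have hAq : Real.sqrt (1+u) * Real.sqrt (1+u) = 1+u := Real.mul_self_sqrt h1u.le
    calc ((Real.sqrt (1+u))⁻¹ * Real.exp (-(t * (F*s p).re^2)/(1+u)))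
          * ((Real.sqrt (1+u))⁻¹ * Real.exp (-(t * (F*s p).im^2)/(1+u)))
        = (Real.sqrt (1+u) * Real.sqrt (1+u))⁻¹ *
            (Real.exp (-(t * (F*s p).re^2)/(1+u)) * Real.exp (-(t * (F*s p).im^2)/(1+u))) := by
          rw [mul_inv]; ring
      _ = (1+u)⁻¹ * Real.exp (-(t*ρ^2)/(1+u)) := by
          rw [hAq, ← Real.exp_add, ← add_div]
          congr 2
          rw [← hms p]; ring
  have hint_val : ∫ x, Real.exp (-(t * S x)) ∂(Measure.pi fun _ : Fin P => m)
      = ((1+u)⁻¹ * Real.exp (-(t*ρ^2)/(1+u)))^P := by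
    rw [hprod, Finset.prod_congr rfl fun p _ => hone p, Finset.prod_const,
      Finset.card_univ, Fintype.card_fin]
  -- the per-factor analytic inequality
  have e1 : t*ρ^2 = u*(ρ^2/ν^2) := by rw [ht_def]; field_simp
  have e2 : t*c = u*(1+γ) := by rw [ht_def, hc_def]; field_simp
  have e3 : (ρ^2/ν^2-γ)^2/(2*(1+2*(ρ^2/ν^2))) = u*(ρ^2/ν^2-γ)/2 := by
    rw [← huδ]; field_simp
  have e4 : u*(ρ^2/ν^2-γ)/2 + u*γ + u^2/2 = u*(ρ^2/ν^2)*(1-u) := by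
    linear_combination (u/2) * huδ
  have e5 : u*(ρ^2/ν^2)*(1-u) ≤ u*(ρ^2/ν^2)/(1+u) := by
    rw [le_div_iff₀ h1u]
    nlinarith [mul_nonneg (mul_nonneg hu.le hr.le) (sq_nonneg u)]
  have e6 : u*(ρ^2/ν^2-γ)/2 + u*γ + u^2/2 ≤ u*(ρ^2/ν^2)/(1+u) := e4 ▸ e5
  set X : ℝ := -((ρ^2/ν^2-γ)^2/(2*(1+2*(ρ^2/ν^2)))) - t*c with hX_def
  have hkey : -(t*ρ^2)/(1+u) ≤ Real.log (1+u) + X := by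
    have hlb := log_quad_lb hu.le
    rw [hX_def, e1, e2, e3]
    have hdiv : -(u*(ρ^2/ν^2))/(1+u) = -(u*(ρ^2/ν^2)/(1+u)) := by ring
    rw [hdiv]
    linarith [e6]
  have hfac : (1+u)⁻¹ * Real.exp (-(t*ρ^2)/(1+u)) ≤ Real.exp X := by
    calc (1+u)⁻¹ * Real.exp (-(t*ρ^2)/(1+u))
        ≤ (1+u)⁻¹ * Real.exp (Real.log (1+u) + X) :=
          mul_le_mul_of_nonneg_left (Real.exp_le_exp.2 hkey) (by positivity)
      _ = Real.exp X := by
          rw [Real.exp_add, Real.exp_log h1u]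
          field_simp
  -- assemble
  refine le_trans (le_trans (measure_mono hsub) hmarkov) ?_
  rw [hlint, hint_val]
  apply ENNReal.div_le_of_le_mul
  rw [← ENNReal.ofReal_mul (Real.exp_nonneg _)]
  apply ENNReal.ofReal_le_ofReal
  have hXP : Real.exp (-((P:ℝ)/2) * (ρ^2/ν^2 - γ)^2 / (1 + 2*ρ^2/ν^2))
      * Real.exp (-(t * ((P:ℝ) * c))) = (Real.exp X)^P := by
    rw [← Real.exp_nat_mul, ← Real.exp_add]
    congr 1
    rw [hX_def]
    field_simp
    ring
  rw [hXP]
  exact pow_le_pow_left₀ (by positivity) hfac P
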